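/- Let X be a set and let C be a set function on the subsets of X with values in [0,∞] which is monotone and continuous from below, i.e. for every nondecreasing sequence (A_n) of subsets of X one has C(⋃_n A_n) = sup_n C(A_n). If (f_j) is a nondecreasing sequence of functions f_j : X → [0,∞] and f := sup_j f_j, then ∫_X f dC = lim_{j→∞} ∫_X f_j dC = sup_j ∫_X f_j dC. -/

import Mathlib

open MeasureTheory Set Filter Topology

/-- The Choquet integral of `f : X → ℝ≥0∞` with respect to a set function
`C : Set X → ℝ≥0∞`: `∫_X f dC = ∫₀^∞ C({x | f x ≥ t}) dt`. -/
noncomputable def choquetIntegral {X : Type*} (C : Set X → ENNReal) (f : X → ENNReal) : ENNReal :=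
  ∫⁻ t in Set.Ioi (0 : ℝ), C {x | ENNReal.ofReal t ≤ f x}

/-- Monotone convergence for the Choquet integral: if `C` is monotone and continuous
from below, and `(f j)` is a nondecreasing sequence of nonnegative functions with
pointwise supremum `f`, then `∫_X f dC = lim_j ∫_X f_j dC = sup_j ∫_X f_j dC`. -/
theorem choquet_integral_monotone_convergence {X : Type*} (C : Set X → ENNReal)
    (hC_mono : ∀ A B : Set X, A ⊆ B → C A ≤ C B)
    (hC_below : ∀ A : ℕ → Set X, (∀ n, A n ⊆ A (n + 1)) →
      C (⋃ n, A n) = ⨆ n, C (A n))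
    (f : ℕ → X → ENNReal) (hf_mono : ∀ j x, f j x ≤ f (j + 1) x) :
    choquetIntegral C (fun x => ⨆ j, f j x) = ⨆ j, choquetIntegral C (f j) ∧
    Tendsto (fun j => choquetIntegral C (f j)) atTop
      (𝓝 (choquetIntegral C (fun x => ⨆ j, f j x))) := by
  -- Notation
  set F : ℕ → ℝ → ENNReal := fun j t => C {x | ENNReal.ofReal t ≤ f j x} with hFdef
  set G : ℝ → ENNReal := fun t => C {x | ENNReal.ofReal t ≤ ⨆ j, f j x} with hGdef
  set H : ℝ → ENNReal := fun t => C {x | ENNReal.ofReal t < ⨆ j, f j x} with hHdef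
  have hfmono : ∀ x, Monotone fun j => f j x := fun x =>
    monotone_nat_of_le_succ fun j => hf_mono j x
  -- Measurability of antitone functions
  have hFmeas : ∀ j, Measurable (F j) := by
    intro j
    refine Antitone.measurable fun s t hst => ?_
    exact hC_mono _ _ fun x hx => le_trans (ENNReal.ofReal_le_ofReal hst) hx
  have hHmeas : Measurable H := by
    refine Antitone.measurable fun s t hst => ?_
    exact hC_mono _ _ fun x hx => lt_of_le_of_lt (ENNReal.ofReal_le_ofReal hst) hx
  -- F is monotone in j
  have hFj : Monotone F := by
    intro i j hij t
    exact hC_mono _ _ fun x hx => le_trans hx (hfmono x hij)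
  -- pointwise: H t ≤ ⨆ j, F j t
  have hHF : ∀ t, H t ≤ ⨆ j, F j t := by
    intro t
    have hunion : {x | ENNReal.ofReal t < ⨆ j, f j x}
        = ⋃ j, {x | ENNReal.ofReal t < f j x} := by
      ext x
      simp [lt_iSup_iff]
    have hcb := hC_below (fun j => {x | ENNReal.ofReal t < f j x})
      (fun n x hx => lt_of_lt_of_le hx (hf_mono n x))
    rw [hHdef]
    simp only
    rw [hunion, hcb]
    exact iSup_mono fun j => hC_mono _ _ fun x hx => Set.mem_setOf.mpr (le_of_lt hx)
  -- pointwise: F j t ≤ G t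
  have hFG : ∀ j t, F j t ≤ G t := fun j t =>
    hC_mono _ _ fun x hx => le_trans hx (le_iSup (fun j => f j x) j)
  -- Step 1 : ∫ H ≤ ⨆ j ∫ F j
  have step1 : (∫⁻ t in Ioi (0:ℝ), H t) ≤ ⨆ j, ∫⁻ t in Ioi (0:ℝ), F j t := by
    calc (∫⁻ t in Ioi (0:ℝ), H t) ≤ ∫⁻ t in Ioi (0:ℝ), ⨆ j, F j t :=
          lintegral_mono fun t => hHF t
      _ = ⨆ j, ∫⁻ t in Ioi (0:ℝ), F j t := lintegral_iSup hFmeas hFj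
  -- Step 2 : ⨆ j ∫ F j ≤ ∫ G
  have step2 : (⨆ j, ∫⁻ t in Ioi (0:ℝ), F j t) ≤ ∫⁻ t in Ioi (0:ℝ), G t :=
    iSup_le fun j => lintegral_mono fun t => hFG j t
  -- Step 3 : ∫ G ≤ ∫ H  (scaling argument)
  have step3 : (∫⁻ t in Ioi (0:ℝ), G t) ≤ ∫⁻ t in Ioi (0:ℝ), H t := by
    have key : ∀ c : ℝ, 0 < c → c < 1 →
        (∫⁻ t in Ioi (0:ℝ), G t) ≤ ENNReal.ofReal c⁻¹ * ∫⁻ t in Ioi (0:ℝ), H t := by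
      intro c hc0 hc1
      have hGH : ∀ t ∈ Ioi (0:ℝ), G t ≤ H (c * t) := by
        intro t ht
        refine hC_mono _ _ fun x hx => Set.mem_setOf.mpr (lt_of_lt_of_le ?_ hx)
        refine ENNReal.ofReal_lt_ofReal_iff (mem_Ioi.mp ht) |>.mpr ?_
        nlinarith [mem_Ioi.mp ht]
      have h1 : (∫⁻ t in Ioi (0:ℝ), G t) ≤ ∫⁻ t in Ioi (0:ℝ), H (c * t) :=
        setLIntegral_mono_ae ((hHmeas.comp (measurable_const_mul c)).aemeasurable)
          (Filter.Eventually.of_forall hGH)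
      refine h1.trans ?_
      -- change of variables
      have hind : ∀ t : ℝ, (Ioi (0:ℝ)).indicator (fun t => H (c * t)) t
          = (Ioi (0:ℝ)).indicator H (c * t) := by
        intro t
        by_cases ht : t ∈ Ioi (0:ℝ)
        · rw [indicator_of_mem ht, indicator_of_mem]
          exact mem_Ioi.mpr (mul_pos hc0 (mem_Ioi.mp ht))
        · rw [indicator_of_notMem ht, indicator_of_notMem]
          intro hct
          have hct' := mem_Ioi.mp hct
          exact ht (mem_Ioi.mpr (by nlinarith))
      have hφ : Measurable ((Ioi (0:ℝ)).indicator H) :=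
        hHmeas.indicator measurableSet_Ioi
      calc (∫⁻ t in Ioi (0:ℝ), H (c * t))
          = ∫⁻ t, (Ioi (0:ℝ)).indicator (fun t => H (c * t)) t := by
            rw [lintegral_indicator measurableSet_Ioi]
        _ = ∫⁻ t, (Ioi (0:ℝ)).indicator H (c * t) := by
            exact lintegral_congr hind
        _ = ∫⁻ s, (Ioi (0:ℝ)).indicator H s
              ∂(Measure.map (fun t => c * t) volume) := by
            rw [lintegral_map hφ (measurable_const_mul c)]
        _ = ENNReal.ofReal |c⁻¹| * ∫⁻ s, (Ioi (0:ℝ)).indicator H s := by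
            rw [Real.map_volume_mul_left (ne_of_gt hc0), lintegral_smul_measure, smul_eq_mul]
        _ = ENNReal.ofReal c⁻¹ * ∫⁻ t in Ioi (0:ℝ), H t := by
            rw [abs_of_pos (inv_pos.mpr hc0), lintegral_indicator measurableSet_Ioi]
        _ ≤ ENNReal.ofReal c⁻¹ * ∫⁻ t in Ioi (0:ℝ), H t := le_rfl
    -- take c → 1⁻
    have htend : Tendsto (fun c : ℝ => ENNReal.ofReal c⁻¹ * ∫⁻ t in Ioi (0:ℝ), H t)
        (𝓝[<] (1:ℝ)) (𝓝 (∫⁻ t in Ioi (0:ℝ), H t)) := by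
      have h1 : Tendsto (fun c : ℝ => ENNReal.ofReal c⁻¹) (𝓝[<] (1:ℝ)) (𝓝 1) := by
        have h0 : ContinuousAt (fun c : ℝ => c⁻¹) 1 := continuousAt_inv₀ one_ne_zero
        have h2 : Tendsto (fun c : ℝ => c⁻¹) (𝓝 (1:ℝ)) (𝓝 (1:ℝ)) := by
          simpa using h0.tendsto
        have h3 : Tendsto (fun c : ℝ => ENNReal.ofReal c⁻¹) (𝓝[<] (1:ℝ))
            (𝓝 (ENNReal.ofReal 1)) :=
          ENNReal.tendsto_ofReal (h2.mono_left (nhdsWithin_le_nhds (s := Iio 1)))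
        simpa using h3
      have h4 := ENNReal.Tendsto.mul_const (b := ∫⁻ t in Ioi (0:ℝ), H t) h1
        (Or.inl one_ne_zero)
      simpa using h4
    refine ge_of_tendsto htend ?_
    filter_upwards [Ioo_mem_nhdsLT_of_mem (by simp : (1:ℝ) ∈ Ioc 0 1)] with c hc
    exact key c hc.1 hc.2
  -- combine
  have heq : choquetIntegral C (fun x => ⨆ j, f j x) = ⨆ j, choquetIntegral C (f j) := by
    have h1 : choquetIntegral C (fun x => ⨆ j, f j x) = ∫⁻ t in Ioi (0:ℝ), G t := rfl
    have h2 : ∀ j, choquetIntegral C (f j) = ∫⁻ t in Ioi (0:ℝ), F j t := fun j => rfl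
    rw [h1]
    simp_rw [h2]
    exact le_antisymm (step3.trans step1) step2
  refine ⟨heq, ?_⟩
  rw [heq]
  exact tendsto_atTop_iSup fun i j hij => lintegral_mono fun t => hFj hij t
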